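/- For any real n×n matrix y = (y_{ij}), the average over all permutations π of {1,...,n} of max_{1≤i≤n} |y_{iπ(i)}| satisfies (1/(2n))·∑_{k=1}^n s(k) ≤ Ave_π max_{1≤i≤n} |y_{iπ(i)}| ≤ (1/n)·∑_{k=1}^n s(k), where s(1) ≥ s(2) ≥ ... ≥ s(n²) is the decreasing rearrangement of the n² numbers |y_{ij}|. -/

import Mathlib

open Finset

/-- An Orlicz function: convex on `[0,∞)`, vanishing at `0`, positive on `(0,∞)`. -/
def IsOrlicz (M : ℝ → ℝ) : Prop :=
  ConvexOn ℝ (Set.Ici 0) M ∧ M 0 = 0 ∧ ∀ t : ℝ, 0 < t → 0 < M t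

/-- Legendre conjugate `M*(x) = sup_{t ≥ 0} (x t − M t)`. -/
noncomputable def orliczConj (M : ℝ → ℝ) (x : ℝ) : ℝ :=
  sSup {v : ℝ | ∃ t : ℝ, 0 ≤ t ∧ v = x * t - M t}

/-- Musielak-Orlicz (Luxemburg-type) functional `‖x‖_{Σ M_i}`. -/
noncomputable def musielakNorm {n : ℕ} (M : Fin n → ℝ → ℝ) (x : Fin n → ℝ) : ℝ :=
  sInf {ρ : ℝ | 0 < ρ ∧ ∑ i, M i (|x i| / ρ) ≤ 1}

/-- Average over all permutations of `{1,…,n}`. -/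
noncomputable def permAve (n : ℕ) (f : Equiv.Perm (Fin n) → ℝ) : ℝ :=
  (∑ π : Equiv.Perm (Fin n), f π) / (Nat.factorial n : ℝ)

/-- Maximum of a function on a nonempty `Fin n`. -/
noncomputable def maxFin {n : ℕ} (hn : 0 < n) (g : Fin n → ℝ) : ℝ :=
  Finset.univ.sup' (Finset.univ_nonempty_iff.mpr ⟨⟨0, hn⟩⟩) g

open Equiv

section KSaux

section counting
variable {n : ℕ}

lemma fiber_card_eq (i : Fin n) (j j' : Fin n) :
    (univ.filter fun π : Perm (Fin n) => π i = j).card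
      = (univ.filter fun π : Perm (Fin n) => π i = j').card := by
  apply Finset.card_nbij' (fun π => π.trans (Equiv.swap j j'))
    (fun π => π.trans (Equiv.swap j j'))
  · intro π hπ
    simp only [mem_coe, mem_filter, mem_univ, true_and] at hπ ⊢
    simp [hπ]
  · intro π hπ
    simp only [mem_coe, mem_filter, mem_univ, true_and] at hπ ⊢
    simp [hπ]
  · intro π _; ext x; simp
  · intro π _; ext x; simp

lemma card_fix (i j : Fin n) :
    (univ.filter fun π : Perm (Fin n) => π i = j).card = Nat.factorial (n - 1) := by
  have h := Finset.card_eq_sum_card_fiberwise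
    (f := fun π : Perm (Fin n) => π i) (s := univ) (t := univ) (fun x _ => mem_univ _)
  rw [card_univ, Fintype.card_perm, Fintype.card_fin] at h
  rw [Finset.sum_congr rfl (fun j' _ => fiber_card_eq i j' j)] at h
  simp only [Finset.sum_const, card_univ, Fintype.card_fin, smul_eq_mul] at h
  have hn : 0 < n := i.pos
  have hfac : Nat.factorial n = n * Nat.factorial (n - 1) := (Nat.mul_factorial_pred hn.ne').symm
  have := h.symm.trans hfac
  exact Nat.eq_of_mul_eq_mul_left hn this

end counting

section counting2
variable {n : ℕ}

lemma fiber2_card_eq (i i' : Fin n) (a b a' b' : Fin n) (hab : a ≠ b) (hab' : a' ≠ b') :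
    (univ.filter fun π : Perm (Fin n) => π i = a ∧ π i' = b).card
      = (univ.filter fun π : Perm (Fin n) => π i = a' ∧ π i' = b').card := by
  set τ := Equiv.swap a a' with hτ
  set c := τ b with hc
  have hca' : c ≠ a' := by
    intro h
    have h2 : τ b = τ a := by
      rw [← hc, h, hτ, Equiv.swap_apply_left]
    exact hab (τ.injective h2).symm
  set σ := τ.trans (Equiv.swap c b') with hσ
  have hσa : σ a = a' := by
    rw [hσ]; simp only [Equiv.trans_apply]
    rw [hτ]; rw [Equiv.swap_apply_left]
    exact Equiv.swap_apply_of_ne_of_ne hca'.symm hab'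
  have hσb : σ b = b' := by
    rw [hσ]; simp only [Equiv.trans_apply, ← hc]
    exact Equiv.swap_apply_left c b'
  apply Finset.card_nbij' (fun π => π.trans σ) (fun π => π.trans σ.symm)
  · intro π hπ
    simp only [mem_coe, mem_filter, mem_univ, true_and] at hπ ⊢
    simp [hπ.1, hπ.2, hσa, hσb]
  · intro π hπ
    simp only [mem_coe, mem_filter, mem_univ, true_and] at hπ ⊢
    constructor
    · apply σ.injective; simp [hπ.1, hσa]
    · apply σ.injective; simp [hπ.2, hσb]
  · intro π _; ext x; simp
  · intro π _; ext x; simp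

lemma card_fix2 (i i' j j' : Fin n) (hi : i ≠ i') (hj : j ≠ j') :
    (n * n - n) * (univ.filter fun π : Perm (Fin n) => π i = j ∧ π i' = j').card
      = Nat.factorial n := by
  have h := Finset.card_eq_sum_card_fiberwise
    (f := fun π : Perm (Fin n) => (π i, π i')) (s := univ) (t := univ) (fun x _ => mem_univ _)
  rw [card_univ, Fintype.card_perm, Fintype.card_fin] at h
  have hsplit : (univ : Finset ((Fin n) × (Fin n)))
      = (univ : Finset (Fin n)).offDiag ∪ univ.filter (fun p => p.1 = p.2) := by
    ext p; simp [Finset.mem_offDiag, em]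
    tauto
  rw [hsplit, Finset.sum_union] at h
  · have hdiag : ∑ p ∈ (univ : Finset ((Fin n)×(Fin n))).filter (fun p => p.1 = p.2),
        (univ.filter fun π : Perm (Fin n) => (π i, π i') = p).card = 0 := by
      apply Finset.sum_eq_zero
      intro p hp
      simp only [mem_filter, mem_univ, true_and] at hp
      rw [Finset.card_eq_zero]
      ext π
      simp only [mem_filter, mem_univ, true_and, Finset.notMem_empty, iff_false]
      intro hps
      have h1 : π i = p.1 := (Prod.mk.injEq _ _ _ _ ▸ hps).1
      have h2 : π i' = p.2 := (Prod.mk.injEq _ _ _ _ ▸ hps).2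
      exact hi (π.injective (by rw [h1, h2, hp]))
    rw [hdiag, add_zero] at h
    have hconst : ∀ p ∈ (univ : Finset (Fin n)).offDiag,
        (univ.filter fun π : Perm (Fin n) => (π i, π i') = p).card
          = (univ.filter fun π : Perm (Fin n) => π i = j ∧ π i' = j').card := by
      intro p hp
      rw [Finset.mem_offDiag] at hp
      have := fiber2_card_eq i i' p.1 p.2 j j' hp.2.2 hj
      rw [← this]
      congr 1
      ext π; simp [Prod.ext_iff]
    rw [Finset.sum_congr rfl hconst, Finset.sum_const, Finset.offDiag_card, card_univ,
      Fintype.card_fin, smul_eq_mul] at h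
    omega
  · rw [Finset.disjoint_left]
    intro p hp hp2
    rw [Finset.mem_offDiag] at hp
    simp only [mem_filter] at hp2
    exact hp.2.2 hp2.2

lemma card_pair_le (p q : Fin n × Fin n) (hpq : p ≠ q) :
    (univ.filter fun π : Perm (Fin n) => π p.1 = p.2 ∧ π q.1 = q.2).card
      ≤ Nat.factorial (n - 2) := by
  by_cases h1 : p.1 = q.1
  · have h2 : p.2 ≠ q.2 := fun h => hpq (Prod.ext h1 h)
    have : (univ.filter fun π : Perm (Fin n) => π p.1 = p.2 ∧ π q.1 = q.2) = ∅ := by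
      ext π
      simp only [mem_filter, mem_univ, true_and, Finset.notMem_empty, iff_false]
      rintro ⟨ha, hb⟩
      exact h2 (by rw [← ha, ← hb, h1])
    simp [this]
  · by_cases h2 : p.2 = q.2
    · have : (univ.filter fun π : Perm (Fin n) => π p.1 = p.2 ∧ π q.1 = q.2) = ∅ := by
        ext π
        simp only [mem_filter, mem_univ, true_and, Finset.notMem_empty, iff_false]
        rintro ⟨ha, hb⟩
        exact h1 (π.injective (by rw [ha, hb, h2]))
      simp [this]
    · have hkey := card_fix2 p.1 q.1 p.2 q.2 h1 h2
      have h2n : 2 ≤ n := by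
        rw [← Fintype.card_fin n]
        exact Fintype.one_lt_card_iff.mpr ⟨p.1, q.1, h1⟩
      have hmul : n * n - n = n * (n - 1) := by
        rcases n with _ | k
        · omega
        · have : (k+1)*(k+1) = (k+1)*k + (k+1) := by ring
          simp only [Nat.succ_sub_one]
          omega
      have hfac : Nat.factorial n = (n * (n-1)) * Nat.factorial (n - 2) := by
        have e1 : Nat.factorial n = n * Nat.factorial (n-1) :=
          (Nat.mul_factorial_pred (by omega)).symm
        have e2 : Nat.factorial (n-1) = (n-1) * Nat.factorial (n-1-1) :=
          (Nat.mul_factorial_pred (by omega)).symm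
        rw [e1, e2]
        have : n - 1 - 1 = n - 2 := by omega
        rw [this]; ring
      rw [hmul, hfac] at hkey
      have hpos : 0 < n * (n-1) := by
        have : 0 < n := by omega
        have : 0 < n - 1 := by omega
        positivity
      exact le_of_eq (Nat.eq_of_mul_eq_mul_left hpos hkey)

end counting2

section bonf
variable {n : ℕ}

lemma sum_t (T : Finset (Fin n × Fin n)) :
    ∑ π : Perm (Fin n), (T.filter fun p => π p.1 = p.2).card
      = T.card * Nat.factorial (n - 1) := by
  have : ∀ π : Perm (Fin n), (T.filter fun p => π p.1 = p.2).card
      = ∑ p ∈ T, if π p.1 = p.2 then 1 else 0 := fun π => Finset.card_filter _ _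
  simp only [this]
  rw [Finset.sum_comm]
  have : ∀ p ∈ T, (∑ π : Perm (Fin n), if π p.1 = p.2 then 1 else 0)
      = Nat.factorial (n - 1) := by
    intro p _
    rw [← Finset.card_filter]
    exact card_fix p.1 p.2
  rw [Finset.sum_congr rfl this, Finset.sum_const, smul_eq_mul]

lemma sum_tt (T : Finset (Fin n × Fin n)) :
    ∑ π : Perm (Fin n), ((T.filter fun p => π p.1 = p.2).card
        * ((T.filter fun p => π p.1 = p.2).card - 1))
      ≤ T.offDiag.card * Nat.factorial (n - 2) := by
  have key : ∀ π : Perm (Fin n), (T.filter fun p => π p.1 = p.2).card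
      * ((T.filter fun p => π p.1 = p.2).card - 1)
      = ∑ pq ∈ T.offDiag, if π pq.1.1 = pq.1.2 ∧ π pq.2.1 = pq.2.2 then 1 else 0 := by
    intro π
    rw [← Finset.card_filter]
    have hset : T.offDiag.filter (fun pq => π pq.1.1 = pq.1.2 ∧ π pq.2.1 = pq.2.2)
        = (T.filter fun p => π p.1 = p.2).offDiag := by
      ext pq
      simp only [Finset.mem_filter, Finset.mem_offDiag]
      tauto
    rw [hset, Finset.offDiag_card]
    rcases Nat.eq_zero_or_pos (T.filter fun p => π p.1 = p.2).card with h | h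
    · simp [h]
    · set t := (T.filter fun p => π p.1 = p.2).card
      have : t * t = t * (t - 1) + t := by
        rcases t with _ | k
        · omega
        · simp only [Nat.succ_sub_one]
          ring
      omega
  simp only [key]
  rw [Finset.sum_comm]
  calc ∑ pq ∈ T.offDiag, ∑ π : Perm (Fin n),
        (if π pq.1.1 = pq.1.2 ∧ π pq.2.1 = pq.2.2 then 1 else 0)
      ≤ ∑ _pq ∈ T.offDiag, Nat.factorial (n - 2) := by
        apply Finset.sum_le_sum
        intro pq hpq
        rw [← Finset.card_filter]
        exact card_pair_le pq.1 pq.2 (Finset.mem_offDiag.mp hpq).2.2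
    _ = T.offDiag.card * Nat.factorial (n - 2) := by
        rw [Finset.sum_const, smul_eq_mul]

lemma union_upper (T : Finset (Fin n × Fin n)) :
    (univ.filter fun π : Perm (Fin n) => ∃ p ∈ T, π p.1 = p.2).card
      ≤ T.card * Nat.factorial (n - 1) := by
  rw [← sum_t T, Finset.card_filter]
  apply Finset.sum_le_sum
  intro π _
  by_cases h : ∃ p ∈ T, π p.1 = p.2
  · simp only [h, if_true]
    obtain ⟨p, hp, hm⟩ := h
    exact Finset.card_pos.mpr ⟨p, Finset.mem_filter.mpr ⟨hp, hm⟩⟩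
  · simp [h]

lemma bonferroni (T : Finset (Fin n × Fin n)) (hT : T.card ≤ n) :
    T.card * Nat.factorial (n - 1)
      ≤ 2 * (univ.filter fun π : Perm (Fin n) => ∃ p ∈ T, π p.1 = p.2).card := by
  set c := (univ.filter fun π : Perm (Fin n) => ∃ p ∈ T, π p.1 = p.2).card with hc
  have key : 2 * (T.card * Nat.factorial (n - 1))
      ≤ 2 * c + T.offDiag.card * Nat.factorial (n - 2) := by
    rw [← sum_t T]
    have hc2 : c = ∑ π : Perm (Fin n),
        if 0 < (T.filter fun p => π p.1 = p.2).card then 1 else 0 := by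
      rw [hc, Finset.card_filter]
      apply Finset.sum_congr rfl
      intro π _
      congr 1
      simp only [eq_iff_iff, Finset.card_pos]
      constructor
      · rintro ⟨p, hp, hm⟩; exact ⟨p, Finset.mem_filter.mpr ⟨hp, hm⟩⟩
      · rintro ⟨p, hp⟩; rw [Finset.mem_filter] at hp; exact ⟨p, hp.1, hp.2⟩
    calc 2 * ∑ π : Perm (Fin n), (T.filter fun p => π p.1 = p.2).card
        = ∑ π : Perm (Fin n), 2 * (T.filter fun p => π p.1 = p.2).card := by
          rw [Finset.mul_sum]
      _ ≤ ∑ π : Perm (Fin n),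
            (2 * (if 0 < (T.filter fun p => π p.1 = p.2).card then 1 else 0)
              + (T.filter fun p => π p.1 = p.2).card
                * ((T.filter fun p => π p.1 = p.2).card - 1)) := by
          apply Finset.sum_le_sum
          intro π _
          set t := (T.filter fun p => π p.1 = p.2).card
          rcases t with _ | _ | k
          · simp
          · simp
          · simp only [Nat.succ_sub_one, if_pos (Nat.succ_pos _)]
            nlinarith
      _ = 2 * c + ∑ π : Perm (Fin n), (T.filter fun p => π p.1 = p.2).card
              * ((T.filter fun p => π p.1 = p.2).card - 1) := by
          rw [Finset.sum_add_distrib, ← Finset.mul_sum, ← hc2]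
      _ ≤ 2 * c + T.offDiag.card * Nat.factorial (n - 2) := by
          exact Nat.add_le_add_left (sum_tt T) _
  have hoff : T.offDiag.card * Nat.factorial (n - 2) ≤ T.card * Nat.factorial (n - 1) := by
    rw [Finset.offDiag_card]
    have h1 : T.card * T.card - T.card ≤ T.card * (n - 1) := by
      rcases Nat.eq_zero_or_pos T.card with h | h
      · simp [h]
      · have : T.card * T.card - T.card = T.card * (T.card - 1) := by
          rcases T.card with _ | k
          · omega
          · have : (k+1)*(k+1) = (k+1)*k + (k+1) := by ring
            simp only [Nat.succ_sub_one]
            omega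
        rw [this]
        exact Nat.mul_le_mul_left _ (by omega)
    calc (T.card * T.card - T.card) * Nat.factorial (n - 2)
        ≤ (T.card * (n - 1)) * Nat.factorial (n - 2) := Nat.mul_le_mul_right _ h1
      _ = T.card * ((n - 1) * Nat.factorial (n - 2)) := by ring
      _ ≤ T.card * Nat.factorial (n - 1) := by
          apply Nat.mul_le_mul_left
          rcases Nat.lt_or_ge n 2 with h | h
          · rcases n with _ | _ | k
            · simp
            · simp
            · omega
          · have : n - 1 - 1 = n - 2 := by omega
            rw [← this]
            exact le_of_eq (Nat.mul_factorial_pred (by omega))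
  omega

end bonf

lemma union_upper' {n : ℕ} (T : Finset (Fin n × Fin n)) (S : Finset (Perm (Fin n)))
    (hS : ∀ π : Perm (Fin n), π ∈ S ↔ ∃ p ∈ T, π p.1 = p.2) :
    S.card ≤ T.card * Nat.factorial (n - 1) := by
  classical
  have hSe : S = univ.filter fun π : Perm (Fin n) => ∃ p ∈ T, π p.1 = p.2 := by
    ext π
    rw [hS π, Finset.mem_filter]
    simp
  rw [hSe]
  exact union_upper T

lemma bonferroni' {n : ℕ} (T : Finset (Fin n × Fin n)) (hT : T.card ≤ n)
    (S : Finset (Perm (Fin n)))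
    (hS : ∀ π : Perm (Fin n), π ∈ S ↔ ∃ p ∈ T, π p.1 = p.2) :
    T.card * Nat.factorial (n - 1) ≤ 2 * S.card := by
  classical
  have hSe : S = univ.filter fun π : Perm (Fin n) => ∃ p ∈ T, π p.1 = p.2 := by
    ext π
    rw [hS π, Finset.mem_filter]
    simp
  rw [hSe]
  exact bonferroni T hT

lemma tel_Ico (f : ℕ → ℝ) (a N : ℕ) (h : a ≤ N) :
    ∑ k ∈ Finset.Ico a N, (f k - f (k+1)) = f a - f N := by
  induction N with
  | zero =>
    have : a = 0 := Nat.le_zero.mp h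
    subst this; simp
  | succ m ih =>
    rcases Nat.lt_or_ge a (m+1) with h1 | h1
    · have ham : a ≤ m := by omega
      rw [Finset.sum_Ico_succ_top ham, ih ham]; ring
    · have : a = m+1 := by omega
      subst this; simp

lemma abel_sum (f : ℕ → ℝ) (m : ℕ) :
    ∑ k ∈ Finset.range m, (f k - f (k+1)) * ((k:ℝ)+1)
      = ∑ k ∈ Finset.range m, f k - m * f m := by
  induction m with
  | zero => simp
  | succ p ih =>
    rw [Finset.sum_range_succ, ih, Finset.sum_range_succ (f := f)]
    push_cast; ring

lemma card_filter_lt (N t : ℕ) (h : t ≤ N) :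
    ((univ : Finset (Fin N)).filter fun m => m.1 < t).card = t := by
  rw [← Finset.card_range t]
  apply Finset.card_nbij (fun m => m.1)
  · intro m hm
    simp only [mem_coe, mem_filter, mem_univ, true_and] at hm
    simpa using hm
  · intro m _ m' _ hmm'
    exact Fin.val_injective hmm'
  · intro a ha
    simp only [coe_range, Set.mem_Iio] at ha
    refine ⟨⟨a, lt_of_lt_of_le ha h⟩, ?_, rfl⟩
    simp [ha]

lemma card_filter_le (N k : ℕ) :
    ((univ : Finset (Fin N)).filter fun m => m.1 ≤ k).card ≤ k + 1 := by
  rw [← Finset.card_range (k+1)]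
  apply Finset.card_le_card_of_injOn (fun m => m.1)
  · intro m hm
    simp only [mem_coe, mem_filter, mem_univ, true_and] at hm
    simp; omega
  · intro m _ m' _ hmm'
    exact Fin.val_injective hmm'

lemma max_eq_sum {n : ℕ} (hn : 0 < n) (y : Fin n → Fin n → ℝ)
    (s : Fin (n*n) → ℝ) (e : Fin (n*n) ≃ Fin n × Fin n)
    (hs_anti : ∀ k l : Fin (n*n), k ≤ l → s l ≤ s k)
    (hs_val : ∀ k : Fin (n*n), s k = |y (e k).1 (e k).2|)
    (s' : ℕ → ℝ) (hs' : ∀ (k : ℕ) (h : k < n*n), s' k = s ⟨k, h⟩)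
    (hs'0 : ∀ k : ℕ, ¬ k < n*n → s' k = 0)
    (π : Perm (Fin n)) :
    maxFin hn (fun i => |y i (π i)|)
      = ∑ k ∈ Finset.range (n*n),
          if (∃ m : Fin (n*n), m.1 ≤ k ∧ π (e m).1 = (e m).2)
          then (s' k - s' (k+1)) else 0 := by
  classical
  have hs'nonneg : ∀ k, 0 ≤ s' k := by
    intro k; by_cases h : k < n*n
    · rw [hs' k h, hs_val]; exact abs_nonneg _
    · rw [hs'0 k h]
  have hs'mono : ∀ k l, k ≤ l → s' l ≤ s' k := by
    intro k l hkl
    by_cases hl : l < n*n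
    · have hk : k < n*n := lt_of_le_of_lt hkl hl
      rw [hs' k hk, hs' l hl]
      exact hs_anti ⟨k,hk⟩ ⟨l,hl⟩ hkl
    · rw [hs'0 l hl]; exact hs'nonneg k
  set I := univ.filter (fun m : Fin (n*n) => π (e m).1 = (e m).2) with hI
  have hne : I.Nonempty := by
    refine ⟨e.symm (⟨0,hn⟩, π ⟨0,hn⟩), ?_⟩
    simp [hI, Equiv.apply_symm_apply]
  set r := I.min' hne with hr
  have hrI : r ∈ I := Finset.min'_mem I hne
  have hmatch : π (e r).1 = (e r).2 := (Finset.mem_filter.mp hrI).2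
  have step1 : maxFin hn (fun i => |y i (π i)|) = s' r.1 := by
    apply le_antisymm
    · apply Finset.sup'_le
      intro i _
      set m := e.symm (i, π i) with hm
      have hem : e m = (i, π i) := e.apply_symm_apply _
      have hmI : m ∈ I := by simp [hI, hem]
      have hval : |y i (π i)| = s' m.1 := by
        rw [hs' m.1 m.2]
        have : (⟨m.1, m.2⟩ : Fin (n*n)) = m := rfl
        rw [this, hs_val, hem]
      rw [hval]
      exact hs'mono r.1 m.1 (Fin.le_def.mp (Finset.min'_le I m hmI))
    · have hval : s' r.1 = |y (e r).1 (π (e r).1)| := by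
        rw [hs' r.1 r.2]
        have : (⟨r.1, r.2⟩ : Fin (n*n)) = r := rfl
        rw [this, hs_val, hmatch]
      rw [hval]
      exact Finset.le_sup' (fun i => |y i (π i)|) (Finset.mem_univ (e r).1)
  rw [step1]
  have step2 : ∀ k : ℕ, (∃ m : Fin (n*n), m.1 ≤ k ∧ π (e m).1 = (e m).2) ↔ r.1 ≤ k := by
    intro k
    constructor
    · rintro ⟨m, hmk, hmm⟩
      have hmI : m ∈ I := by simp [hI, hmm]
      exact le_trans (Fin.le_def.mp (Finset.min'_le I m hmI)) hmk
    · intro hk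
      exact ⟨r, hk, hmatch⟩
  have hcongr : ∑ k ∈ Finset.range (n*n),
        (if (∃ m : Fin (n*n), m.1 ≤ k ∧ π (e m).1 = (e m).2)
          then (s' k - s' (k+1)) else 0)
      = ∑ k ∈ Finset.range (n*n), (if r.1 ≤ k then s' k - s' (k+1) else 0) :=
    Finset.sum_congr rfl (fun k _ => by rw [if_congr (step2 k) rfl rfl])
  rw [hcongr]
  have hfilter : (Finset.range (n*n)).filter (fun k => r.1 ≤ k) = Finset.Ico r.1 (n*n) := by
    ext a
    simp only [Finset.mem_filter, Finset.mem_range, Finset.mem_Ico]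
    tauto
  rw [← Finset.sum_filter, hfilter, tel_Ico _ _ _ (le_of_lt r.2),
    hs'0 (n*n) (lt_irrefl _), sub_zero]

end KSaux

/-- Kwapień–Schütt: the permutation average of `max_i |y_{iπ(i)}|` is, up to the
factor 2, the average of the `n` largest entries of the matrix `(|y_{ij}|)`. -/
theorem permAve_max_ge_and_le_sum_largest
    (n : ℕ) (hn : 0 < n) (y : Fin n → Fin n → ℝ)
    (s : Fin (n * n) → ℝ) (e : Fin (n * n) ≃ Fin n × Fin n)
    (hs_anti : ∀ k l : Fin (n * n), k ≤ l → s l ≤ s k)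
    (hs_val : ∀ k : Fin (n * n), s k = |y (e k).1 (e k).2|) :
    (1 / (2 * n)) * ∑ k : Fin n, s ⟨k.1, lt_of_lt_of_le k.2 (Nat.le_mul_of_pos_left n hn)⟩
      ≤ permAve n (fun π => maxFin hn (fun i => |y i (π i)|)) ∧
    permAve n (fun π => maxFin hn (fun i => |y i (π i)|))
      ≤ (1 / n) * ∑ k : Fin n, s ⟨k.1, lt_of_lt_of_le k.2 (Nat.le_mul_of_pos_left n hn)⟩ := by
  classical
  set s' : ℕ → ℝ := fun k => if h : k < n*n then s ⟨k,h⟩ else 0 with hs'def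
  have hs' : ∀ (k : ℕ) (h : k < n*n), s' k = s ⟨k,h⟩ := fun k h => dif_pos h
  have hs'0 : ∀ k : ℕ, ¬ k < n*n → s' k = 0 := fun k h => dif_neg h
  have hs'nonneg : ∀ k, 0 ≤ s' k := by
    intro k; by_cases h : k < n*n
    · rw [hs' k h, hs_val]; exact abs_nonneg _
    · rw [hs'0 k h]
  have hs'mono : ∀ k l, k ≤ l → s' l ≤ s' k := by
    intro k l hkl
    by_cases hl : l < n*n
    · have hk : k < n*n := lt_of_le_of_lt hkl hl
      rw [hs' k hk, hs' l hl]
      exact hs_anti ⟨k,hk⟩ ⟨l,hl⟩ hkl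
    · rw [hs'0 l hl]; exact hs'nonneg k
  have hΔ : ∀ k : ℕ, 0 ≤ s' k - s' (k+1) :=
    fun k => sub_nonneg.mpr (hs'mono k (k+1) (Nat.le_succ k))
  have cdef : True := trivial
  -- swap sums
  have hswap : ∑ π : Perm (Fin n), maxFin hn (fun i => |y i (π i)|)
      = ∑ k ∈ Finset.range (n*n), (s' k - s' (k+1)) * ((univ.filter fun π : Perm (Fin n) =>
          ∃ m : Fin (n*n), m.1 ≤ k ∧ π (e m).1 = (e m).2).card : ℝ) := by
    rw [Finset.sum_congr rfl
      (fun π _ => max_eq_sum hn y s e hs_anti hs_val s' hs' hs'0 π)]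
    rw [Finset.sum_comm]
    apply Finset.sum_congr rfl
    intro k _
    rw [← Finset.sum_filter, Finset.sum_const, nsmul_eq_mul, mul_comm]
  -- equality of filter sets with image form
  have hupper : ∀ k : ℕ, (univ.filter fun π : Perm (Fin n) =>
      ∃ m : Fin (n*n), m.1 ≤ k ∧ π (e m).1 = (e m).2).card
      ≤ Nat.factorial (n-1) * min (k+1) n := by
    intro k
    rcases le_or_gt (k+1) n with h | h
    · rw [min_eq_left h]
      have hS : ∀ π : Perm (Fin n),
          π ∈ (univ.filter fun π : Perm (Fin n) =>
            ∃ m : Fin (n*n), m.1 ≤ k ∧ π (e m).1 = (e m).2)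
          ↔ ∃ p ∈ ((univ.filter fun m : Fin (n*n) => m.1 ≤ k).image e), π p.1 = p.2 := by
        intro π
        rw [Finset.mem_filter]
        simp only [Finset.mem_univ, true_and]
        constructor
        · rintro ⟨m, hmk, hmm⟩
          exact ⟨e m, Finset.mem_image_of_mem e
            (Finset.mem_filter.mpr ⟨Finset.mem_univ m, hmk⟩), hmm⟩
        · rintro ⟨p, hp, hmm⟩
          obtain ⟨m, hm, rfl⟩ := Finset.mem_image.mp hp
          exact ⟨m, (Finset.mem_filter.mp hm).2, hmm⟩
      calc (univ.filter fun π : Perm (Fin n) =>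
            ∃ m : Fin (n*n), m.1 ≤ k ∧ π (e m).1 = (e m).2).card
          ≤ ((univ.filter fun m : Fin (n*n) => m.1 ≤ k).image e).card
              * Nat.factorial (n-1) := union_upper' _ _ hS
        _ ≤ (k+1) * Nat.factorial (n-1) :=
            Nat.mul_le_mul_right _ (le_trans Finset.card_image_le (card_filter_le _ k))
        _ = Nat.factorial (n-1) * (k+1) := Nat.mul_comm _ _
    · rw [min_eq_right (le_of_lt h)]
      calc (univ.filter fun π : Perm (Fin n) =>
            ∃ m : Fin (n*n), m.1 ≤ k ∧ π (e m).1 = (e m).2).card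
          ≤ (univ : Finset (Perm (Fin n))).card := Finset.card_filter_le _ _
        _ = Nat.factorial n := by rw [card_univ, Fintype.card_perm, Fintype.card_fin]
        _ = n * Nat.factorial (n-1) := (Nat.mul_factorial_pred hn.ne').symm
        _ = Nat.factorial (n-1) * n := Nat.mul_comm _ _
  have hlower : ∀ k : ℕ, Nat.factorial (n-1) * min (k+1) n
      ≤ 2 * (univ.filter fun π : Perm (Fin n) =>
          ∃ m : Fin (n*n), m.1 ≤ k ∧ π (e m).1 = (e m).2).card := by
    intro k
    have ht : min (k+1) n ≤ n := min_le_right _ _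
    have htN : min (k+1) n ≤ n*n := le_trans ht (Nat.le_mul_of_pos_left n hn)
    have hcardT' : ((univ.filter fun m : Fin (n*n) => m.1 < min (k+1) n).image e).card
        = min (k+1) n := by
      rw [Finset.card_image_of_injective _ e.injective, card_filter_lt _ _ htN]
    have hS' : ∀ π : Perm (Fin n),
        π ∈ (univ.filter fun π : Perm (Fin n) =>
          ∃ m : Fin (n*n), m.1 < min (k+1) n ∧ π (e m).1 = (e m).2)
        ↔ ∃ p ∈ ((univ.filter fun m : Fin (n*n) => m.1 < min (k+1) n).image e),
            π p.1 = p.2 := by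
      intro π
      rw [Finset.mem_filter]
      simp only [Finset.mem_univ, true_and]
      constructor
      · rintro ⟨m, hmk, hmm⟩
        exact ⟨e m, Finset.mem_image_of_mem e
          (Finset.mem_filter.mpr ⟨Finset.mem_univ m, hmk⟩), hmm⟩
      · rintro ⟨p, hp, hmm⟩
        obtain ⟨m, hm, rfl⟩ := Finset.mem_image.mp hp
        exact ⟨m, (Finset.mem_filter.mp hm).2, hmm⟩
    have hb := bonferroni' _ (le_of_eq_of_le hcardT' ht) _ hS'
    rw [hcardT'] at hb
    have hsub : (univ.filter fun π : Perm (Fin n) =>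
          ∃ m : Fin (n*n), m.1 < min (k+1) n ∧ π (e m).1 = (e m).2)
        ⊆ (univ.filter fun π : Perm (Fin n) =>
          ∃ m : Fin (n*n), m.1 ≤ k ∧ π (e m).1 = (e m).2) := by
      intro π hπ
      rw [Finset.mem_filter] at hπ ⊢
      obtain ⟨hπu, m, hmk, hmm⟩ := hπ
      refine ⟨hπu, m, ?_, hmm⟩
      have := min_le_left (k+1) n
      omega
    calc Nat.factorial (n-1) * min (k+1) n
        = min (k+1) n * Nat.factorial (n-1) := Nat.mul_comm _ _
      _ ≤ 2 * (univ.filter fun π : Perm (Fin n) =>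
            ∃ m : Fin (n*n), m.1 < min (k+1) n ∧ π (e m).1 = (e m).2).card := hb
      _ ≤ 2 * (univ.filter fun π : Perm (Fin n) =>
            ∃ m : Fin (n*n), m.1 ≤ k ∧ π (e m).1 = (e m).2).card :=
          Nat.mul_le_mul_left _ (Finset.card_le_card hsub)
  -- key identity
  have hnN : n ≤ n*n := Nat.le_mul_of_pos_left n hn
  have hkey : ∑ k ∈ Finset.range (n*n), (s' k - s' (k+1)) * ((min (k+1) n : ℕ) : ℝ)
      = ∑ k ∈ Finset.range n, s' k := by
    rw [← Finset.sum_range_add_sum_Ico _ hnN]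
    have h1 : ∑ k ∈ Finset.range n, (s' k - s' (k+1)) * ((min (k+1) n : ℕ):ℝ)
        = ∑ k ∈ Finset.range n, (s' k - s' (k+1)) * ((k:ℝ)+1) := by
      apply Finset.sum_congr rfl
      intro k hk
      rw [Finset.mem_range] at hk
      rw [min_eq_left (by omega)]
      push_cast; ring
    have h2 : ∑ k ∈ Finset.Ico n (n*n), (s' k - s' (k+1)) * ((min (k+1) n : ℕ):ℝ)
        = (∑ k ∈ Finset.Ico n (n*n), (s' k - s' (k+1))) * (n:ℝ) := by
      rw [Finset.sum_mul]
      apply Finset.sum_congr rfl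
      intro k hk
      rw [Finset.mem_Ico] at hk
      rw [min_eq_right (by omega)]
    rw [h1, h2, abel_sum, tel_Ico s' n (n*n) hnN, hs'0 (n*n) (lt_irrefl _)]
    ring
  -- relate statement sum with S
  set S := ∑ k ∈ Finset.range n, s' k with hSdef
  have hSfin : ∑ k : Fin n, s ⟨k.1, lt_of_lt_of_le k.2 (Nat.le_mul_of_pos_left n hn)⟩ = S := by
    rw [hSdef, ← Fin.sum_univ_eq_sum_range (fun k => s' k) n]
    apply Finset.sum_congr rfl
    intro k _
    exact (hs' k.1 _).symm
  have hSnonneg : 0 ≤ S := Finset.sum_nonneg (fun k _ => hs'nonneg k)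
  -- Sig bounds
  set Sig := ∑ π : Perm (Fin n), maxFin hn (fun i => |y i (π i)|) with hSigdef
  have hfacR : ((Nat.factorial (n-1) : ℕ) : ℝ) ≥ 0 := by positivity
  have hSigupper : Sig ≤ (Nat.factorial (n-1) : ℝ) * S := by
    rw [hswap]
    calc ∑ k ∈ Finset.range (n*n), (s' k - s' (k+1)) * ((univ.filter fun π : Perm (Fin n) =>
          ∃ m : Fin (n*n), m.1 ≤ k ∧ π (e m).1 = (e m).2).card : ℝ)
        ≤ ∑ k ∈ Finset.range (n*n),
            (s' k - s' (k+1)) * ((Nat.factorial (n-1) * min (k+1) n : ℕ) : ℝ) := by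
          apply Finset.sum_le_sum
          intro k _
          exact mul_le_mul_of_nonneg_left (by exact_mod_cast hupper k) (hΔ k)
      _ = (Nat.factorial (n-1) : ℝ)
            * ∑ k ∈ Finset.range (n*n), (s' k - s' (k+1)) * ((min (k+1) n : ℕ) : ℝ) := by
          rw [Finset.mul_sum]
          apply Finset.sum_congr rfl
          intro k _
          push_cast; ring
      _ = (Nat.factorial (n-1) : ℝ) * S := by rw [hkey, hSdef]
  have hSiglower : (Nat.factorial (n-1) : ℝ) * S ≤ 2 * Sig := by
    rw [hswap]
    calc (Nat.factorial (n-1) : ℝ) * S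
        = (Nat.factorial (n-1) : ℝ)
            * ∑ k ∈ Finset.range (n*n), (s' k - s' (k+1)) * ((min (k+1) n : ℕ) : ℝ) := by
          rw [hkey, hSdef]
      _ = ∑ k ∈ Finset.range (n*n),
            (s' k - s' (k+1)) * ((Nat.factorial (n-1) * min (k+1) n : ℕ) : ℝ) := by
          rw [Finset.mul_sum]
          apply Finset.sum_congr rfl
          intro k _
          push_cast; ring
      _ ≤ ∑ k ∈ Finset.range (n*n), (s' k - s' (k+1)) * ((2 * (univ.filter fun π : Perm (Fin n) =>
          ∃ m : Fin (n*n), m.1 ≤ k ∧ π (e m).1 = (e m).2).card : ℕ) : ℝ) := by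
          apply Finset.sum_le_sum
          intro k _
          exact mul_le_mul_of_nonneg_left (by exact_mod_cast hlower k) (hΔ k)
      _ = 2 * ∑ k ∈ Finset.range (n*n), (s' k - s' (k+1)) * ((univ.filter fun π : Perm (Fin n) =>
          ∃ m : Fin (n*n), m.1 ≤ k ∧ π (e m).1 = (e m).2).card : ℝ) := by
          rw [Finset.mul_sum]
          apply Finset.sum_congr rfl
          intro k _
          push_cast; ring
  -- final
  have hfac : ((Nat.factorial n : ℕ) : ℝ) = (n:ℝ) * (Nat.factorial (n-1) : ℝ) := by
    exact_mod_cast (Nat.mul_factorial_pred hn.ne').symm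
  have hfacpos : (0:ℝ) < (Nat.factorial n : ℝ) := by
    exact_mod_cast Nat.factorial_pos n
  have hfacpos' : (0:ℝ) < (Nat.factorial (n-1) : ℝ) := by
    exact_mod_cast Nat.factorial_pos (n-1)
  have hnpos : (0:ℝ) < (n:ℝ) := by exact_mod_cast hn
  rw [hSfin]
  have hPA : permAve n (fun π => maxFin hn (fun i => |y i (π i)|))
      = Sig / (Nat.factorial n : ℝ) := rfl
  constructor
  · rw [hPA]
    have h1 : (Nat.factorial (n-1) : ℝ) * S / (2 * (Nat.factorial n : ℝ))
        ≤ 2 * Sig / (2 * (Nat.factorial n : ℝ)) := by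
      gcongr
    have h2 : 2 * Sig / (2 * (Nat.factorial n : ℝ)) = Sig / (Nat.factorial n : ℝ) := by
      field_simp
    have h3 : (Nat.factorial (n-1) : ℝ) * S / (2 * (Nat.factorial n : ℝ))
        = 1 / (2 * n) * S := by
      rw [hfac]
      field_simp
    rw [← h3, ← h2]
    exact h1
  · rw [hPA]
    have h1 : Sig / (Nat.factorial n : ℝ)
        ≤ (Nat.factorial (n-1) : ℝ) * S / (Nat.factorial n : ℝ) := by
      gcongr
    have h3 : (Nat.factorial (n-1) : ℝ) * S / (Nat.factorial n : ℝ) = 1 / n * S := by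
      rw [hfac]
      field_simp
    rw [← h3]
    exact h1
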